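/- arXiv:2308.10101 — 4 statements merged into one kernel-verified Lean document; each statement's English description precedes it below -/
import Mathlib

section
/- (Theorem S.1) Let b_1 ≤ … ≤ b_P be sorted, a_i > 0 rearranged accordingly, and let ρ be the number of strictly positive components of the unique minimizer of θᵀ diag(a)θ + bᵀθ over the simplex. Then ρ = max{ 1 ≤ j ≤ P : b_j − (2 + ∑_{i=1}^j b_i/a_i)/(∑_{i=1}^j 1/a_i) < 0 }. -/
open Finset in
lemma simplex_qp_stationarity
    (P : ℕ) (a b : ℕ → ℝ) (θ : ℕ → ℝ)
    (ha : ∀ i ∈ Finset.Icc 1 P, 0 < a i)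
    (hθ0 : ∀ i, 0 ≤ θ i)
    (hθout : ∀ i, i ∉ Finset.Icc 1 P → θ i = 0)
    (hθsum : ∑ i ∈ Finset.Icc 1 P, θ i = 1)
    (hmin : IsMinOn (fun t : ℕ → ℝ => ∑ i ∈ Finset.Icc 1 P, (a i * t i ^ 2 + b i * t i))
      {t : ℕ → ℝ | (∀ i, 0 ≤ t i) ∧ (∀ i, i ∉ Finset.Icc 1 P → t i = 0) ∧
        ∑ i ∈ Finset.Icc 1 P, t i = 1} θ)
    {p q : ℕ} (hp : p ∈ Finset.Icc 1 P) (hq : q ∈ Finset.Icc 1 P) (hθp : 0 < θ p) :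
    2 * a p * θ p + b p ≤ 2 * a q * θ q + b q := by
  rcases eq_or_ne p q with rfl | hpq
  · exact le_refl _
  by_contra hlt
  push_neg at hlt
  set c : ℝ := (2 * a q * θ q + b q) - (2 * a p * θ p + b p) with hc
  have hc0 : c < 0 := by simp only [hc]; linarith
  have hap := ha p hp
  have haq := ha q hq
  have hA : 0 < a p + a q := by linarith
  set ε : ℝ := min (θ p) (-c / (2 * (a p + a q))) with hε
  have hε0 : 0 < ε := lt_min hθp (div_pos (by linarith) (by linarith))
  have hεp : ε ≤ θ p := min_le_left _ _
  have hεA : ε * (a p + a q) < -c := by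
    have h1 : ε ≤ -c / (2 * (a p + a q)) := min_le_right _ _
    have h2 : ε * (2 * (a p + a q)) ≤ -c := (le_div_iff₀ (by linarith)).mp h1
    nlinarith [mul_pos hε0 hA]
  set t : ℕ → ℝ := fun i => if i = p then θ p - ε else if i = q then θ q + ε else θ i with ht
  have htp : t p = θ p - ε := by simp [ht]
  have htq : t q = θ q + ε := by simp [ht, Ne.symm hpq]
  have htother : ∀ i, i ≠ p → i ≠ q → t i = θ i := by
    intro i h1 h2; simp [ht, h1, h2]
  have hpqI : ({p, q} : Finset ℕ) ⊆ Finset.Icc 1 P :=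
    Finset.insert_subset_iff.mpr ⟨hp, Finset.singleton_subset_iff.mpr hq⟩
  have hsum_t : ∑ i ∈ Finset.Icc 1 P, t i = 1 := by
    have h1 : ∑ i ∈ ({p, q} : Finset ℕ), (t i - θ i) = ∑ i ∈ Finset.Icc 1 P, (t i - θ i) :=
      Finset.sum_subset hpqI (by
        intro x _ hx
        have hxp : x ≠ p := by rintro rfl; exact hx (by simp)
        have hxq : x ≠ q := by rintro rfl; exact hx (by simp)
        rw [htother x hxp hxq]; ring)
    have h2 : ∑ i ∈ ({p, q} : Finset ℕ), (t i - θ i) = 0 := by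
      rw [Finset.sum_pair hpq, htp, htq]; ring
    have h3 : ∑ i ∈ Finset.Icc 1 P, (t i - θ i) = 0 := h1 ▸ h2
    rw [Finset.sum_sub_distrib, hθsum] at h3
    linarith
  have htmem : t ∈ {t : ℕ → ℝ | (∀ i, 0 ≤ t i) ∧ (∀ i, i ∉ Finset.Icc 1 P → t i = 0) ∧
      ∑ i ∈ Finset.Icc 1 P, t i = 1} := by
    refine ⟨?_, ?_, hsum_t⟩
    · intro i
      rcases eq_or_ne i p with rfl | h1
      · rw [htp]; linarith
      rcases eq_or_ne i q with rfl | h2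
      · rw [htq]; have := hθ0 i; linarith
      · rw [htother i h1 h2]; exact hθ0 i
    · intro i hi
      have h1 : i ≠ p := by rintro rfl; exact hi hp
      have h2 : i ≠ q := by rintro rfl; exact hi hq
      rw [htother i h1 h2]; exact hθout i hi
  have hft : ∑ i ∈ Finset.Icc 1 P, (a i * t i ^ 2 + b i * t i)
      = (∑ i ∈ Finset.Icc 1 P, (a i * θ i ^ 2 + b i * θ i)) + (ε * c + ε ^ 2 * (a p + a q)) := by
    have h1 : ∑ i ∈ ({p, q} : Finset ℕ),
        ((a i * t i ^ 2 + b i * t i) - (a i * θ i ^ 2 + b i * θ i))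
        = ∑ i ∈ Finset.Icc 1 P, ((a i * t i ^ 2 + b i * t i) - (a i * θ i ^ 2 + b i * θ i)) :=
      Finset.sum_subset hpqI (by
        intro x _ hx
        have hxp : x ≠ p := by rintro rfl; exact hx (by simp)
        have hxq : x ≠ q := by rintro rfl; exact hx (by simp)
        rw [htother x hxp hxq]; ring)
    have h2 : ∑ i ∈ ({p, q} : Finset ℕ),
        ((a i * t i ^ 2 + b i * t i) - (a i * θ i ^ 2 + b i * θ i))
        = ε * c + ε ^ 2 * (a p + a q) := by
      rw [Finset.sum_pair hpq, htp, htq, hc]; ring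
    have h3 := h1 ▸ h2
    rw [Finset.sum_sub_distrib] at h3
    linarith
  have hle := isMinOn_iff.mp hmin t htmem
  rw [hft] at hle
  nlinarith [mul_pos hε0 (show (0:ℝ) < -(c + ε * (a p + a q)) by linarith)]
/-- Theorem S.1: with `b` sorted ascending (and `a` rearranged
accordingly, `a i > 0`), the number `ρ` of strictly positive components of the unique
minimizer of `θᵀ diag(a) θ + bᵀ θ` over the simplex equals
`max { 1 ≤ j ≤ P : b j - (2 + ∑_{i=1}^j b i / a i) / (∑_{i=1}^j 1 / a i) < 0 }`. -/
theorem simplex_qp_rho_characterization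
    (P ρ : ℕ) (a b : ℕ → ℝ) (θ : ℕ → ℝ)
    (hP : 1 ≤ P)
    (ha : ∀ i ∈ Finset.Icc 1 P, 0 < a i)
    (hsort : ∀ i ∈ Finset.Icc 1 P, ∀ j ∈ Finset.Icc 1 P, i ≤ j → b i ≤ b j)
    (hθmem : θ ∈ {t : ℕ → ℝ | (∀ i, 0 ≤ t i) ∧ (∀ i, i ∉ Finset.Icc 1 P → t i = 0) ∧
      ∑ i ∈ Finset.Icc 1 P, t i = 1})
    (hmin : IsMinOn (fun t : ℕ → ℝ => ∑ i ∈ Finset.Icc 1 P, (a i * t i ^ 2 + b i * t i))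
      {t : ℕ → ℝ | (∀ i, 0 ≤ t i) ∧ (∀ i, i ∉ Finset.Icc 1 P → t i = 0) ∧
        ∑ i ∈ Finset.Icc 1 P, t i = 1} θ)
    (hρ : ρ = ((Finset.Icc 1 P).filter (fun p => 0 < θ p)).card) :
    ρ = sSup {j : ℕ | 1 ≤ j ∧ j ≤ P ∧
      b j - (2 + ∑ i ∈ Finset.Icc 1 j, b i / a i) / (∑ i ∈ Finset.Icc 1 j, 1 / a i)
        < 0} := by
  obtain ⟨hθ0, hθout, hθsum⟩ := hθmem
  have key : ∀ p ∈ Finset.Icc 1 P, 0 < θ p → ∀ q ∈ Finset.Icc 1 P,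
      2 * a p * θ p + b p ≤ 2 * a q * θ q + b q := fun p hp hθp q hq =>
    simplex_qp_stationarity P a b θ ha hθ0 hθout hθsum hmin hp hq hθp
  -- a strictly positive coordinate exists
  have hex : ∃ p0 ∈ Finset.Icc 1 P, 0 < θ p0 := by
    by_contra h
    push_neg at h
    have h0 : ∑ i ∈ Finset.Icc 1 P, θ i = 0 :=
      Finset.sum_eq_zero fun i hi => le_antisymm (h i hi) (hθ0 i)
    rw [hθsum] at h0; norm_num at h0
  obtain ⟨p0, hp0I, hp0⟩ := hex
  set μ : ℝ := -(2 * a p0 * θ p0 + b p0) with hμ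
  have hgrad : ∀ p ∈ Finset.Icc 1 P, 0 < θ p → 2 * a p * θ p + b p = -μ := by
    intro p hp hθp
    have h1 := key p hp hθp p0 hp0I
    have h2 := key p0 hp0I hp0 p hp
    simp only [hμ, neg_neg]; linarith
  have hzero : ∀ p ∈ Finset.Icc 1 P, θ p = 0 → -μ ≤ b p := by
    intro p hp h0
    have := key p0 hp0I hp0 p hp
    rw [h0] at this
    simp only [hμ, neg_neg]; linarith
  have hsupport : ∀ p ∈ Finset.Icc 1 P, (0 < θ p ↔ b p + μ < 0) := by
    intro p hp
    constructor
    · intro h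
      have h1 := hgrad p hp h
      have h2 := ha p hp
      nlinarith
    · intro h
      by_contra h'
      have h0 : θ p = 0 := le_antisymm (not_lt.mp h') (hθ0 p)
      have := hzero p hp h0
      linarith
  set supp : Finset ℕ := (Finset.Icc 1 P).filter (fun p => 0 < θ p) with hsupp
  have hρ1 : 1 ≤ ρ := by
    rw [hρ]
    exact Finset.card_pos.mpr ⟨p0, Finset.mem_filter.mpr ⟨hp0I, hp0⟩⟩
  have hρP : ρ ≤ P := by
    rw [hρ]
    calc supp.card ≤ (Finset.Icc 1 P).card := Finset.card_le_card (Finset.filter_subset _ _)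
    _ = P := by rw [Nat.card_Icc]; omega
  have heq : supp = Finset.Icc 1 ρ := by
    have hsub : supp ⊆ Finset.Icc 1 ρ := by
      intro p hp
      obtain ⟨hpI, hpθ⟩ := Finset.mem_filter.mp hp
      have hp1 : 1 ≤ p := (Finset.mem_Icc.mp hpI).1
      have hIp : Finset.Icc 1 p ⊆ supp := by
        intro q hq
        obtain ⟨hq1, hqp⟩ := Finset.mem_Icc.mp hq
        have hqI : q ∈ Finset.Icc 1 P :=
          Finset.mem_Icc.mpr ⟨hq1, le_trans hqp (Finset.mem_Icc.mp hpI).2⟩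
        have hbq : b q ≤ b p := hsort q hqI p hpI hqp
        have hbp : b p + μ < 0 := (hsupport p hpI).mp hpθ
        exact Finset.mem_filter.mpr ⟨hqI, (hsupport q hqI).mpr (by linarith)⟩
      have := Finset.card_le_card hIp
      rw [Nat.card_Icc] at this
      exact Finset.mem_Icc.mpr ⟨hp1, by omega⟩
    refine Finset.eq_of_subset_of_card_le hsub ?_
    rw [Nat.card_Icc, ← hρ]
    omega
  have hρI : ρ ∈ Finset.Icc 1 P := Finset.mem_Icc.mpr ⟨hρ1, hρP⟩
  have hsuppiff : ∀ p, p ∈ Finset.Icc 1 ρ ↔ (p ∈ Finset.Icc 1 P ∧ 0 < θ p) := by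
    intro p; rw [← heq, hsupp, Finset.mem_filter]
  have hIccsub : Finset.Icc 1 ρ ⊆ Finset.Icc 1 P := by
    intro x hx
    exact ((hsuppiff x).mp hx).1
  -- positivity of the denominator sums
  have hSpos : ∀ j, 1 ≤ j → j ≤ P → 0 < ∑ i ∈ Finset.Icc 1 j, 1 / a i := by
    intro j hj1 hjP
    apply Finset.sum_pos
    · intro i hi
      obtain ⟨hi1, hij⟩ := Finset.mem_Icc.mp hi
      exact div_pos one_pos (ha i (Finset.mem_Icc.mpr ⟨hi1, le_trans hij hjP⟩))
    · exact ⟨1, Finset.mem_Icc.mpr ⟨le_refl 1, hj1⟩⟩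
  have hSρpos : 0 < ∑ i ∈ Finset.Icc 1 ρ, 1 / a i := hSpos ρ hρ1 hρP
  -- sum over support equals 1
  have hsum_ρ : ∑ i ∈ Finset.Icc 1 ρ, θ i = 1 := by
    rw [← hθsum]
    apply Finset.sum_subset hIccsub
    intro x hxI hx
    by_contra h
    have : 0 < θ x := lt_of_le_of_ne (hθ0 x) (Ne.symm h)
    exact hx ((hsuppiff x).mpr ⟨hxI, this⟩)
  -- the multiplier equation
  have hμeq : -μ * (∑ i ∈ Finset.Icc 1 ρ, 1 / a i) = 2 + ∑ i ∈ Finset.Icc 1 ρ, b i / a i := by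
    have h1 : ∑ i ∈ Finset.Icc 1 ρ, ((-μ - b i) / (2 * a i)) = 1 := by
      rw [← hsum_ρ]
      apply Finset.sum_congr rfl
      intro i hi
      obtain ⟨hiI, hiθ⟩ := (hsuppiff i).mp hi
      have hg := hgrad i hiI hiθ
      have hai := ha i hiI
      field_simp
      linarith
    have h2 : ∀ i ∈ Finset.Icc 1 ρ,
        -μ * (1 / a i) - b i / a i = 2 * ((-μ - b i) / (2 * a i)) := by
      intro i hi
      have hai := ha i (hIccsub hi)
      field_simp
    calc -μ * (∑ i ∈ Finset.Icc 1 ρ, 1 / a i)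
        = ∑ i ∈ Finset.Icc 1 ρ, (-μ * (1 / a i)) := by rw [Finset.mul_sum]
      _ = ∑ i ∈ Finset.Icc 1 ρ, ((-μ * (1 / a i) - b i / a i) + b i / a i) := by
          apply Finset.sum_congr rfl; intro i _; ring
      _ = ∑ i ∈ Finset.Icc 1 ρ, (2 * ((-μ - b i) / (2 * a i)))
            + ∑ i ∈ Finset.Icc 1 ρ, b i / a i := by
          rw [Finset.sum_add_distrib]
          congr 1
          exact Finset.sum_congr rfl h2
      _ = 2 + ∑ i ∈ Finset.Icc 1 ρ, b i / a i := by
          rw [← Finset.mul_sum, h1]; ring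
  -- ρ belongs to the set
  have hρS : ρ ∈ {j : ℕ | 1 ≤ j ∧ j ≤ P ∧
      b j - (2 + ∑ i ∈ Finset.Icc 1 j, b i / a i) / (∑ i ∈ Finset.Icc 1 j, 1 / a i) < 0} := by
    refine ⟨hρ1, hρP, ?_⟩
    have hbρ : b ρ + μ < 0 := (hsupport ρ hρI).mp
      ((hsuppiff ρ).mp (Finset.mem_Icc.mpr ⟨hρ1, le_refl ρ⟩) |>.2)
    rw [← hμeq, mul_div_assoc, div_self (ne_of_gt hSρpos), mul_one]
    linarith
  -- ρ is an upper bound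
  have hub : ∀ j ∈ {j : ℕ | 1 ≤ j ∧ j ≤ P ∧
      b j - (2 + ∑ i ∈ Finset.Icc 1 j, b i / a i) / (∑ i ∈ Finset.Icc 1 j, 1 / a i) < 0},
      j ≤ ρ := by
    rintro j ⟨hj1, hjP, hjlt⟩
    by_contra hjρ
    push_neg at hjρ
    have hjI : j ∈ Finset.Icc 1 P := Finset.mem_Icc.mpr ⟨hj1, hjP⟩
    have hSj : 0 < ∑ i ∈ Finset.Icc 1 j, 1 / a i := hSpos j hj1 hjP
    have hjlt' : b j * (∑ i ∈ Finset.Icc 1 j, 1 / a i)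
        < 2 + ∑ i ∈ Finset.Icc 1 j, b i / a i := by
      have := sub_neg.mp hjlt
      exact (lt_div_iff₀ hSj).mp this
    -- θ j = 0 hence -μ ≤ b j
    have hθj : θ j = 0 := by
      by_contra h
      have hpos : 0 < θ j := lt_of_le_of_ne (hθ0 j) (Ne.symm h)
      have := (Finset.mem_Icc.mp ((hsuppiff j).mpr ⟨hjI, hpos⟩)).2
      omega
    have hbj : -μ ≤ b j := hzero j hjI hθj
    -- split the sums
    have hsplit1 : ∑ i ∈ Finset.Icc 1 ρ, b i / a i + ∑ i ∈ Finset.Ioc ρ j, b i / a i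
        = ∑ i ∈ Finset.Icc 1 j, b i / a i := by
      rw [show Finset.Icc 1 ρ = Finset.Ioc 0 ρ from by rw [← Finset.Icc_add_one_left_eq_Ioc, zero_add],
          show Finset.Icc 1 j = Finset.Ioc 0 j from by rw [← Finset.Icc_add_one_left_eq_Ioc, zero_add]]
      exact Finset.sum_Ioc_consecutive _ (Nat.zero_le ρ) (le_of_lt hjρ)
    have hsplit2 : ∑ i ∈ Finset.Icc 1 ρ, 1 / a i + ∑ i ∈ Finset.Ioc ρ j, 1 / a i
        = ∑ i ∈ Finset.Icc 1 j, 1 / a i := by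
      rw [show Finset.Icc 1 ρ = Finset.Ioc 0 ρ from by rw [← Finset.Icc_add_one_left_eq_Ioc, zero_add],
          show Finset.Icc 1 j = Finset.Ioc 0 j from by rw [← Finset.Icc_add_one_left_eq_Ioc, zero_add]]
      exact Finset.sum_Ioc_consecutive _ (Nat.zero_le ρ) (le_of_lt hjρ)
    -- termwise bounds on the tail
    have htail : ∑ i ∈ Finset.Ioc ρ j, b i / a i
        ≤ b j * ∑ i ∈ Finset.Ioc ρ j, 1 / a i := by
      rw [Finset.mul_sum]
      apply Finset.sum_le_sum
      intro i hi
      obtain ⟨hρi, hij⟩ := Finset.mem_Ioc.mp hi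
      have hiI : i ∈ Finset.Icc 1 P := Finset.mem_Icc.mpr ⟨by omega, le_trans hij hjP⟩
      have hbi : b i ≤ b j := hsort i hiI j hjI hij
      have hai := ha i hiI
      rw [mul_one_div]
      exact (div_le_div_iff_of_pos_right hai).mpr hbi
    have hρterm : -μ * (∑ i ∈ Finset.Icc 1 ρ, 1 / a i)
        ≤ b j * (∑ i ∈ Finset.Icc 1 ρ, 1 / a i) :=
      mul_le_mul_of_nonneg_right hbj (le_of_lt hSρpos)
    have : 2 + ∑ i ∈ Finset.Icc 1 j, b i / a i
        ≤ b j * (∑ i ∈ Finset.Icc 1 j, 1 / a i) := by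
      rw [← hsplit1, ← hsplit2, mul_add]
      have := hμeq
      linarith [htail, hρterm]
    linarith
  -- conclude
  have hbdd : BddAbove {j : ℕ | 1 ≤ j ∧ j ≤ P ∧
      b j - (2 + ∑ i ∈ Finset.Icc 1 j, b i / a i) / (∑ i ∈ Finset.Icc 1 j, 1 / a i) < 0} :=
    ⟨ρ, fun j hj => hub j hj⟩
  exact (le_antisymm (csSup_le ⟨ρ, hρS⟩ hub) (le_csSup hbdd hρS)).symm
end

section
/- Define φ_j = b_j − (2 + ∑_{i=1}^j b_i/a_i)/(∑_{i=1}^j 1/a_i) with a_i > 0 and b sorted ascending. If for some ρ and μ we have b_i + μ < 0 for i ≤ ρ, b_i + μ ≥ 0 for i > ρ, and μ = −(2+∑_{i=1}^ρ b_i/a_i)/(∑_{i=1}^ρ 1/a_i), then φ_j < 0 for all j ≤ ρ. -/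
/-- the `j ≤ ρ` part of the proof of Theorem S.1: under the KKT sign
conditions and the formula (S.8) for `μ`, the quantity
`φ j = b j - (2 + ∑_{i=1}^j b i / a i) / (∑_{i=1}^j 1 / a i)` is negative for all
`1 ≤ j ≤ ρ`. -/
theorem phi_neg_below_rho
    (P ρ : ℕ) (a b : ℕ → ℝ) (μ : ℝ)
    (hρ1 : 1 ≤ ρ) (hρP : ρ ≤ P)
    (ha : ∀ i ∈ Finset.Icc 1 P, 0 < a i)
    (hsort : ∀ i ∈ Finset.Icc 1 P, ∀ j ∈ Finset.Icc 1 P, i ≤ j → b i ≤ b j)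
    (hneg : ∀ i, 1 ≤ i → i ≤ ρ → b i + μ < 0)
    (hnonneg : ∀ i, ρ < i → i ≤ P → 0 ≤ b i + μ)
    (hμ : μ = -(2 + ∑ i ∈ Finset.Icc 1 ρ, b i / a i) / (∑ i ∈ Finset.Icc 1 ρ, 1 / a i)) :
    ∀ j, 1 ≤ j → j ≤ ρ →
      b j - (2 + ∑ i ∈ Finset.Icc 1 j, b i / a i) / (∑ i ∈ Finset.Icc 1 j, 1 / a i)
        < 0 := by
  intro j hj1 hjρ
  have hapos : ∀ i ∈ Finset.Icc 1 ρ, 0 < a i := fun i hi => by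
    simp only [Finset.mem_Icc] at hi
    exact ha i (Finset.mem_Icc.mpr ⟨hi.1, hi.2.trans hρP⟩)
  have hsj : 0 < ∑ i ∈ Finset.Icc 1 j, 1 / a i := by
    apply Finset.sum_pos
    · intro i hi
      simp only [Finset.mem_Icc] at hi
      exact one_div_pos.mpr (hapos i (Finset.mem_Icc.mpr ⟨hi.1, hi.2.trans hjρ⟩))
    · exact Finset.nonempty_Icc.mpr hj1
  have hsρ : 0 < ∑ i ∈ Finset.Icc 1 ρ, 1 / a i := by
    apply Finset.sum_pos
    · intro i hi
      exact one_div_pos.mpr (hapos i hi)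
    · exact Finset.nonempty_Icc.mpr hρ1
  -- split sums over Icc 1 ρ = Icc 1 j ∪ Icc (j+1) ρ
  have hIcc : ∀ n : ℕ, Finset.Icc 1 n = Finset.Ioc 0 n := fun n => by
    rw [← Finset.Icc_add_one_left_eq_Ioc, zero_add]
  have hsplit : ∀ f : ℕ → ℝ,
      (∑ i ∈ Finset.Icc 1 j, f i) + (∑ i ∈ Finset.Ioc j ρ, f i)
        = ∑ i ∈ Finset.Icc 1 ρ, f i := fun f => by
    rw [hIcc, hIcc]
    exact Finset.sum_Ioc_consecutive f (Nat.zero_le j) hjρ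
  -- from hμ : 2 + T_ρ + μ s_ρ = 0
  have key : 2 + (∑ i ∈ Finset.Icc 1 ρ, b i / a i)
      + μ * (∑ i ∈ Finset.Icc 1 ρ, 1 / a i) = 0 := by
    rw [hμ]
    field_simp
    ring
  rw [sub_neg, lt_div_iff₀ hsj]
  -- 2 + T_j = -μ s_j - ∑_{Ioc j ρ} (b i + μ)/a i
  have hTj : 2 + (∑ i ∈ Finset.Icc 1 j, b i / a i)
      = -μ * (∑ i ∈ Finset.Icc 1 j, 1 / a i)
        - ∑ i ∈ Finset.Ioc j ρ, (b i + μ) / a i := by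
    have h1 := hsplit (fun i => b i / a i)
    have h2 := hsplit (fun i => 1 / a i)
    have h3 : ∀ i ∈ Finset.Ioc j ρ, (b i + μ) / a i = b i / a i + μ * (1 / a i) := by
      intro i hi
      rw [add_div, mul_one_div]
    rw [Finset.sum_congr rfl h3, Finset.sum_add_distrib, ← Finset.mul_sum]
    linear_combination key + h1 + μ * h2
  rw [hTj]
  have hsum_nonpos : ∑ i ∈ Finset.Ioc j ρ, (b i + μ) / a i ≤ 0 := by
    apply Finset.sum_nonpos
    intro i hi
    simp only [Finset.mem_Ioc] at hi
    have hbi : b i + μ < 0 := hneg i (le_trans hj1 (le_of_lt hi.1)) hi.2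
    have hai : 0 < a i := hapos i (Finset.mem_Icc.mpr ⟨le_trans hj1 (le_of_lt hi.1), hi.2⟩)
    exact le_of_lt (div_neg_of_neg_of_pos hbi hai)
  have hbj : b j < -μ := by linarith [hneg j hj1 hjρ]
  nlinarith [mul_lt_mul_of_pos_right hbj hsj]
end

section
/- Define φ_j = b_j − (2 + ∑_{i=1}^j b_i/a_i)/(∑_{i=1}^j 1/a_i) with a_i > 0 and b sorted ascending. If b_ρ + μ < 0 ≤ b_i + μ for i > ρ with μ = −(2+∑_{i=1}^ρ b_i/a_i)/(∑_{i=1}^ρ 1/a_i), then φ_j ≥ 0 for all j > ρ. -/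
/-- the `j > ρ` part of the proof of Theorem S.1: under the KKT sign
conditions and the formula (S.8) for `μ`, the quantity
`φ j = b j - (2 + ∑_{i=1}^j b i / a i) / (∑_{i=1}^j 1 / a i)` is nonnegative for all
`ρ < j ≤ P`. -/
theorem phi_nonneg_above_rho
    (P ρ : ℕ) (a b : ℕ → ℝ) (μ : ℝ)
    (hρ1 : 1 ≤ ρ) (hρP : ρ ≤ P)
    (ha : ∀ i ∈ Finset.Icc 1 P, 0 < a i)
    (hsort : ∀ i ∈ Finset.Icc 1 P, ∀ j ∈ Finset.Icc 1 P, i ≤ j → b i ≤ b j)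
    (hneg : b ρ + μ < 0)
    (hnonneg : ∀ i, ρ < i → i ≤ P → 0 ≤ b i + μ)
    (hμ : μ = -(2 + ∑ i ∈ Finset.Icc 1 ρ, b i / a i) / (∑ i ∈ Finset.Icc 1 ρ, 1 / a i)) :
    ∀ j, ρ < j → j ≤ P →
      0 ≤ b j - (2 + ∑ i ∈ Finset.Icc 1 j, b i / a i) / (∑ i ∈ Finset.Icc 1 j, 1 / a i) := by
  intro j hρj hjP
  have hsρpos : 0 < ∑ i ∈ Finset.Icc 1 ρ, 1 / a i := by
    apply Finset.sum_pos
    · intro i hi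
      rcases Finset.mem_Icc.mp hi with ⟨h1, h2⟩
      have := ha i (Finset.mem_Icc.mpr ⟨h1, le_trans h2 hρP⟩)
      positivity
    · exact Finset.nonempty_Icc.mpr hρ1
  have hsjpos : 0 < ∑ i ∈ Finset.Icc 1 j, 1 / a i := by
    apply Finset.sum_pos
    · intro i hi
      rcases Finset.mem_Icc.mp hi with ⟨h1, h2⟩
      have := ha i (Finset.mem_Icc.mpr ⟨h1, le_trans h2 hjP⟩)
      positivity
    · exact Finset.nonempty_Icc.mpr (le_trans hρ1 hρj.le)
  rw [sub_nonneg, div_le_iff₀ hsjpos]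
  have hX : 2 + ∑ i ∈ Finset.Icc 1 ρ, b i / a i
      = -μ * (∑ i ∈ Finset.Icc 1 ρ, 1 / a i) := by
    rw [hμ]; field_simp
  have hsplit : ∀ f : ℕ → ℝ, ∑ i ∈ Finset.Icc 1 j, f i
      = (∑ i ∈ Finset.Icc 1 ρ, f i) + ∑ i ∈ Finset.Ioc ρ j, f i := by
    intro f
    have h1 : ∀ n : ℕ, Finset.Icc 1 n = Finset.Ioc 0 n := fun n => Finset.Icc_add_one_left_eq_Ioc 0 n
    rw [h1, h1, Finset.sum_Ioc_consecutive _ (Nat.zero_le ρ) hρj.le]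
  have hterm : 0 ≤ ∑ i ∈ Finset.Ioc ρ j, (b j - b i) / a i := by
    apply Finset.sum_nonneg
    intro i hi
    rcases Finset.mem_Ioc.mp hi with ⟨h1, h2⟩
    have hiP : i ∈ Finset.Icc 1 P :=
      Finset.mem_Icc.mpr ⟨le_trans hρ1 h1.le, le_trans h2 hjP⟩
    have hjmem : j ∈ Finset.Icc 1 P :=
      Finset.mem_Icc.mpr ⟨le_trans hρ1 hρj.le, hjP⟩
    have hb := hsort i hiP j hjmem h2
    have hai := ha i hiP
    have : 0 ≤ b j - b i := by linarith
    positivity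
  have heq : ∑ i ∈ Finset.Ioc ρ j, (b j - b i) / a i
      = b j * (∑ i ∈ Finset.Ioc ρ j, 1 / a i) - ∑ i ∈ Finset.Ioc ρ j, b i / a i := by
    rw [Finset.mul_sum, ← Finset.sum_sub_distrib]
    apply Finset.sum_congr rfl
    intro i _
    ring
  have hbjμ : 0 ≤ b j + μ := hnonneg j hρj hjP
  rw [hsplit (fun i => b i / a i), hsplit (fun i => 1 / a i)]
  nlinarith [mul_nonneg hbjμ hsρpos.le]
end

section
/- The output θ of Algorithm 1, namely θ_p = max{−(b_p + μ)/(2a_p), 0} with μ = −(2 + ∑_{i=1}^ρ u_i/v_i)/(∑_{i=1}^ρ 1/v_i) and ρ as in Theorem S.1 (u, v the sorted versions of b, a), satisfies the KKT conditions of the problem min_{θ ∈ Δ^{P-1}} θᵀ diag(a)θ + bᵀθ and is therefore the unique global minimizer. -/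
/-- correctness of Algorithm 1: its output
`θ p = max (-(b p + μ)/(2 a p)) 0`, with `μ` computed from the sorted versions
`u = b ∘ σ`, `v = a ∘ σ` and `ρ` as in Theorem S.1, is the unique global minimizer of
`θᵀ diag(a) θ + bᵀ θ` over the simplex. -/
theorem algorithm_one_correct
    (P ρ : ℕ) (a b : ℕ → ℝ) (σ : Equiv.Perm ℕ) (u v θ : ℕ → ℝ) (μ : ℝ)
    (hP : 1 ≤ P)
    (ha : ∀ i ∈ Finset.Icc 1 P, 0 < a i)
    (hσ : ∀ i ∈ Finset.Icc 1 P, σ i ∈ Finset.Icc 1 P)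
    (hu : ∀ i, u i = b (σ i)) (hv : ∀ i, v i = a (σ i))
    (husort : ∀ i ∈ Finset.Icc 1 P, ∀ j ∈ Finset.Icc 1 P, i ≤ j → u i ≤ u j)
    (hρ : ρ = sSup {j : ℕ | 1 ≤ j ∧ j ≤ P ∧
      u j - (2 + ∑ i ∈ Finset.Icc 1 j, u i / v i) / (∑ i ∈ Finset.Icc 1 j, 1 / v i)
        < 0})
    (hμ : μ = -(2 + ∑ i ∈ Finset.Icc 1 ρ, u i / v i) / (∑ i ∈ Finset.Icc 1 ρ, 1 / v i))
    (hθ : ∀ p, θ p = if p ∈ Finset.Icc 1 P then max (-(b p + μ) / (2 * a p)) 0 else 0) :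
    θ ∈ {t : ℕ → ℝ | (∀ i, 0 ≤ t i) ∧ (∀ i, i ∉ Finset.Icc 1 P → t i = 0) ∧
        ∑ i ∈ Finset.Icc 1 P, t i = 1} ∧
      IsMinOn (fun t : ℕ → ℝ => ∑ i ∈ Finset.Icc 1 P, (a i * t i ^ 2 + b i * t i))
        {t : ℕ → ℝ | (∀ i, 0 ≤ t i) ∧ (∀ i, i ∉ Finset.Icc 1 P → t i = 0) ∧
          ∑ i ∈ Finset.Icc 1 P, t i = 1} θ ∧
      ∀ θ' : ℕ → ℝ,
        θ' ∈ {t : ℕ → ℝ | (∀ i, 0 ≤ t i) ∧ (∀ i, i ∉ Finset.Icc 1 P → t i = 0) ∧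
          ∑ i ∈ Finset.Icc 1 P, t i = 1} →
        IsMinOn (fun t : ℕ → ℝ => ∑ i ∈ Finset.Icc 1 P, (a i * t i ^ 2 + b i * t i))
          {t : ℕ → ℝ | (∀ i, 0 ≤ t i) ∧ (∀ i, i ∉ Finset.Icc 1 P → t i = 0) ∧
            ∑ i ∈ Finset.Icc 1 P, t i = 1} θ' →
        θ' = θ := by
  have hv_pos : ∀ i ∈ Finset.Icc 1 P, 0 < v i := by
    intro i hi; rw [hv]; exact ha _ (hσ i hi)
  -- the index set defining ρ
  set S : Set ℕ := {j : ℕ | 1 ≤ j ∧ j ≤ P ∧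
      u j - (2 + ∑ i ∈ Finset.Icc 1 j, u i / v i) / (∑ i ∈ Finset.Icc 1 j, 1 / v i)
        < 0} with hS
  have h1S : (1 : ℕ) ∈ S := by
    refine ⟨le_refl 1, hP, ?_⟩
    have hv1 : 0 < v 1 := hv_pos 1 (Finset.mem_Icc.mpr ⟨le_refl 1, hP⟩)
    have hIcc : Finset.Icc 1 1 = {1} := Finset.Icc_self 1
    rw [hIcc, Finset.sum_singleton, Finset.sum_singleton]
    have hrw : (2 + u 1 / v 1) / (1 / v 1) = 2 * v 1 + u 1 := by
      field_simp
    rw [hrw]; linarith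
  have hbdd : BddAbove S := ⟨P, fun j hj => hj.2.1⟩
  have hρS : ρ ∈ S := by rw [hρ]; exact Nat.sSup_mem ⟨1, h1S⟩ hbdd
  obtain ⟨hρ1, hρP, hρlt⟩ := hρS
  set A := ∑ i ∈ Finset.Icc 1 ρ, u i / v i with hA
  set B := ∑ i ∈ Finset.Icc 1 ρ, 1 / v i with hB
  have hsubρ : Finset.Icc 1 ρ ⊆ Finset.Icc 1 P := Finset.Icc_subset_Icc_right hρP
  have hBpos : 0 < B := by
    apply Finset.sum_pos
    · intro i hi
      have := hv_pos i (hsubρ hi)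
      positivity
    · exact ⟨1, Finset.mem_Icc.mpr ⟨le_refl 1, hρ1⟩⟩
  have hBne : B ≠ 0 := ne_of_gt hBpos
  have hμ' : μ = -((2 + A) / B) := by rw [hμ, neg_div]
  have hμB : μ * B = -(2 + A) := by
    rw [hμ']; field_simp
  have hμρ : u ρ + μ < 0 := by
    rw [hμ']; linarith [hρlt]
  have hneg : ∀ i ∈ Finset.Icc 1 ρ, u i + μ < 0 := by
    intro i hi
    obtain ⟨h1i, hiρ⟩ := Finset.mem_Icc.mp hi
    have hle : u i ≤ u ρ :=
      husort i (Finset.mem_Icc.mpr ⟨h1i, hiρ.trans hρP⟩)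
        ρ (Finset.mem_Icc.mpr ⟨hρ1, hρP⟩) hiρ
    linarith
  have hnonneg : ∀ i ∈ Finset.Icc 1 P, ρ < i → 0 ≤ u i + μ := by
    intro i hi hlt
    obtain ⟨h1i, hiP⟩ := Finset.mem_Icc.mp hi
    have hρ1P : ρ + 1 ≤ P := by omega
    have hmem : ρ + 1 ∈ Finset.Icc 1 P := Finset.mem_Icc.mpr ⟨by omega, hρ1P⟩
    have hvpos : 0 < v (ρ + 1) := hv_pos _ hmem
    have hnot : ρ + 1 ∉ S := by
      intro hmem'
      have h := le_csSup hbdd hmem'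
      rw [← hρ] at h
      omega
    rw [hS] at hnot
    simp only [Set.mem_setOf_eq, not_and, not_lt] at hnot
    have hcond := hnot (by omega) hρ1P
    rw [Finset.sum_Icc_succ_top (by omega : 1 ≤ ρ + 1),
        Finset.sum_Icc_succ_top (by omega : 1 ≤ ρ + 1)] at hcond
    -- hcond : 0 ≤ u (ρ+1) - (2 + (A + u(ρ+1)/v(ρ+1))) / (B + 1/v(ρ+1))
    have hB'pos : 0 < B + 1 / v (ρ + 1) := by positivity
    have h1 : (2 + (A + u (ρ + 1) / v (ρ + 1))) ≤ u (ρ + 1) * (B + 1 / v (ρ + 1)) := by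
      have := sub_nonneg.mp hcond
      calc (2 + (A + u (ρ + 1) / v (ρ + 1)))
          = (2 + (A + u (ρ + 1) / v (ρ + 1))) / (B + 1 / v (ρ + 1)) * (B + 1 / v (ρ + 1)) := by
            field_simp
        _ ≤ u (ρ + 1) * (B + 1 / v (ρ + 1)) := by
            apply mul_le_mul_of_nonneg_right this (le_of_lt hB'pos)
    have h2 : 2 + A ≤ u (ρ + 1) * B := by
      have hexp : u (ρ + 1) * (B + 1 / v (ρ + 1))
          = u (ρ + 1) * B + u (ρ + 1) / v (ρ + 1) := by ring
      rw [hexp] at h1; linarith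
    have hbase : 0 ≤ u (ρ + 1) + μ := by
      rw [hμ']
      have : (2 + A) / B ≤ u (ρ + 1) := (div_le_iff₀ hBpos).mpr h2
      linarith
    have hle : u (ρ + 1) ≤ u i :=
      husort (ρ + 1) hmem i hi (by omega)
    linarith
  -- values of θ along σ
  have hθσ : ∀ i ∈ Finset.Icc 1 P, θ (σ i) = max (-(u i + μ) / (2 * v i)) 0 := by
    intro i hi
    rw [hθ (σ i), if_pos (hσ i hi), ← hu, ← hv]
  have hθpos : ∀ i ∈ Finset.Icc 1 ρ, θ (σ i) = -(u i + μ) / (2 * v i) := by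
    intro i hi
    rw [hθσ i (hsubρ hi)]
    apply max_eq_left
    have h1 := hneg i hi
    have h2 := hv_pos i (hsubρ hi)
    apply div_nonneg <;> linarith
  have hθzeroσ : ∀ i ∈ Finset.Icc 1 P, i ∉ Finset.Icc 1 ρ → θ (σ i) = 0 := by
    intro i hi hni
    obtain ⟨h1i, hiP⟩ := Finset.mem_Icc.mp hi
    have hlt : ρ < i := by
      by_contra h
      exact hni (Finset.mem_Icc.mpr ⟨h1i, by omega⟩)
    rw [hθσ i hi]
    apply max_eq_right
    have h1 := hnonneg i hi hlt
    have h2 := hv_pos i hi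
    apply div_nonpos_of_nonpos_of_nonneg <;> linarith
  -- sum of θ equals 1
  have himg : (Finset.Icc 1 P).image σ = Finset.Icc 1 P := by
    apply Finset.eq_of_subset_of_card_le
    · intro x hx
      obtain ⟨i, hi, rfl⟩ := Finset.mem_image.mp hx
      exact hσ i hi
    · rw [Finset.card_image_of_injective _ σ.injective]
  have hsum : ∑ p ∈ Finset.Icc 1 P, θ p = 1 := by
    have e1 : ∑ p ∈ Finset.Icc 1 P, θ p = ∑ i ∈ Finset.Icc 1 P, θ (σ i) := by
      conv_lhs => rw [← himg]
      exact Finset.sum_image (fun x _ y _ h => σ.injective h)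
    have e2 : ∑ i ∈ Finset.Icc 1 P, θ (σ i) = ∑ i ∈ Finset.Icc 1 ρ, θ (σ i) :=
      (Finset.sum_subset hsubρ hθzeroσ).symm
    have e3 : ∑ i ∈ Finset.Icc 1 ρ, θ (σ i)
        = ∑ i ∈ Finset.Icc 1 ρ, ((-(1 / 2)) * (u i / v i) + (-(μ / 2)) * (1 / v i)) := by
      apply Finset.sum_congr rfl
      intro i hi
      rw [hθpos i hi]
      have h2 := hv_pos i (hsubρ hi)
      field_simp
      ring
    rw [e1, e2, e3, Finset.sum_add_distrib, ← Finset.mul_sum, ← Finset.mul_sum, ← hA, ← hB]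
    have : (-(μ / 2)) * B = -(1 / 2) * (μ * B) := by ring
    rw [this, hμB]; ring
  -- feasibility
  have hfeas : θ ∈ {t : ℕ → ℝ | (∀ i, 0 ≤ t i) ∧ (∀ i, i ∉ Finset.Icc 1 P → t i = 0) ∧
      ∑ i ∈ Finset.Icc 1 P, t i = 1} := by
    refine ⟨?_, ?_, hsum⟩
    · intro i
      rw [hθ i]
      split
      · exact le_max_right _ 0
      · exact le_refl 0
    · intro i hi
      rw [hθ i, if_neg hi]
  -- KKT multipliers: complementary slackness and dual feasibility
  have hlam_nonneg : ∀ i ∈ Finset.Icc 1 P, 0 ≤ 2 * a i * θ i + b i + μ := by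
    intro i hi
    have hai := ha i hi
    rw [hθ i, if_pos hi]
    rcases le_or_gt 0 (b i + μ) with h | h
    · rw [max_eq_right (by apply div_nonpos_of_nonpos_of_nonneg <;> linarith)]
      linarith
    · rw [max_eq_left (by apply div_nonneg <;> linarith)]
      have : 2 * a i * (-(b i + μ) / (2 * a i)) = -(b i + μ) := by
        field_simp
      rw [this]; linarith
  have hlam_comp : ∀ i ∈ Finset.Icc 1 P, (2 * a i * θ i + b i + μ) * θ i = 0 := by
    intro i hi
    have hai := ha i hi
    rw [hθ i, if_pos hi]
    rcases le_or_gt 0 (b i + μ) with h | h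
    · rw [max_eq_right (by apply div_nonpos_of_nonpos_of_nonneg <;> linarith)]
      ring
    · rw [max_eq_left (by apply div_nonneg <;> linarith)]
      have : 2 * a i * (-(b i + μ) / (2 * a i)) = -(b i + μ) := by
        field_simp
      rw [this]; ring
  -- key decomposition of the objective
  have hkey : ∀ t : ℕ → ℝ, ∑ i ∈ Finset.Icc 1 P, t i = 1 →
      ∑ i ∈ Finset.Icc 1 P, (a i * t i ^ 2 + b i * t i)
      = ∑ i ∈ Finset.Icc 1 P, (a i * θ i ^ 2 + b i * θ i)
        + (∑ i ∈ Finset.Icc 1 P, a i * (t i - θ i) ^ 2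
          + ∑ i ∈ Finset.Icc 1 P, (2 * a i * θ i + b i + μ) * t i) := by
    intro t ht
    have hpt : ∀ i ∈ Finset.Icc 1 P,
        a i * t i ^ 2 + b i * t i
        = ((a i * θ i ^ 2 + b i * θ i)
          + (a i * (t i - θ i) ^ 2 + (2 * a i * θ i + b i + μ) * t i))
          + (-μ) * (t i - θ i) := by
      intro i hi
      have h0 := hlam_comp i hi
      linear_combination -h0
    rw [Finset.sum_congr rfl hpt, Finset.sum_add_distrib, Finset.sum_add_distrib,
        ← Finset.mul_sum, Finset.sum_sub_distrib, ht, hsum, Finset.sum_add_distrib,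
        Finset.sum_add_distrib]
    ring
  have hmin : IsMinOn (fun t : ℕ → ℝ => ∑ i ∈ Finset.Icc 1 P, (a i * t i ^ 2 + b i * t i))
      {t : ℕ → ℝ | (∀ i, 0 ≤ t i) ∧ (∀ i, i ∉ Finset.Icc 1 P → t i = 0) ∧
        ∑ i ∈ Finset.Icc 1 P, t i = 1} θ := by
    rw [isMinOn_iff]
    rintro t ⟨ht0, _, ht1⟩
    show ∑ i ∈ Finset.Icc 1 P, (a i * θ i ^ 2 + b i * θ i)
      ≤ ∑ i ∈ Finset.Icc 1 P, (a i * t i ^ 2 + b i * t i)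
    rw [hkey t ht1]
    have h1 : 0 ≤ ∑ i ∈ Finset.Icc 1 P, a i * (t i - θ i) ^ 2 :=
      Finset.sum_nonneg fun i hi => by have := ha i hi; positivity
    have h2 : 0 ≤ ∑ i ∈ Finset.Icc 1 P, (2 * a i * θ i + b i + μ) * t i :=
      Finset.sum_nonneg fun i hi => mul_nonneg (hlam_nonneg i hi) (ht0 i)
    linarith
  refine ⟨hfeas, hmin, ?_⟩
  rintro θ' hθ'feas hθ'min
  obtain ⟨ht0', hsupp', ht1'⟩ := hθ'feas
  have hle1 : (fun t : ℕ → ℝ => ∑ i ∈ Finset.Icc 1 P, (a i * t i ^ 2 + b i * t i)) θ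
      ≤ (fun t : ℕ → ℝ => ∑ i ∈ Finset.Icc 1 P, (a i * t i ^ 2 + b i * t i)) θ' :=
    isMinOn_iff.mp hmin θ' ⟨ht0', hsupp', ht1'⟩
  have hle2 : (fun t : ℕ → ℝ => ∑ i ∈ Finset.Icc 1 P, (a i * t i ^ 2 + b i * t i)) θ'
      ≤ (fun t : ℕ → ℝ => ∑ i ∈ Finset.Icc 1 P, (a i * t i ^ 2 + b i * t i)) θ :=
    isMinOn_iff.mp hθ'min θ hfeas
  have heq : ∑ i ∈ Finset.Icc 1 P, (a i * θ' i ^ 2 + b i * θ' i)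
      = ∑ i ∈ Finset.Icc 1 P, (a i * θ i ^ 2 + b i * θ i) :=
    le_antisymm hle2 hle1
  have hdecomp := hkey θ' ht1'
  rw [heq] at hdecomp
  have h1 : 0 ≤ ∑ i ∈ Finset.Icc 1 P, a i * (θ' i - θ i) ^ 2 :=
    Finset.sum_nonneg fun i hi => by have := ha i hi; positivity
  have h2 : 0 ≤ ∑ i ∈ Finset.Icc 1 P, (2 * a i * θ i + b i + μ) * θ' i :=
    Finset.sum_nonneg fun i hi => mul_nonneg (hlam_nonneg i hi) (ht0' i)
  have hzero : ∑ i ∈ Finset.Icc 1 P, a i * (θ' i - θ i) ^ 2 = 0 := by linarith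
  have hterm : ∀ i ∈ Finset.Icc 1 P, a i * (θ' i - θ i) ^ 2 = 0 :=
    (Finset.sum_eq_zero_iff_of_nonneg
      (fun i hi => by have := ha i hi; positivity)).mp hzero
  funext p
  by_cases hp : p ∈ Finset.Icc 1 P
  · have := hterm p hp
    have hap := ha p hp
    have : (θ' p - θ p) ^ 2 = 0 := by
      rcases mul_eq_zero.mp this with h | h
      · exact absurd h (ne_of_gt hap)
      · exact h
    have := pow_eq_zero_iff (n := 2) (by norm_num) |>.mp this
    linarith [this]
  · rw [hsupp' p hp, hθ p, if_neg hp]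
end
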